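/- Let δ > 0 and α ∈ (0, δ), and define E[T_n] = ∑_{k=1}^n S_k where S_k = (1/(δk))·∑_{i=0}^∞ (k/(k+i))·(α/δ)^i. Then ln(n+1)/δ ≤ E[T_n] ≤ (1 + ln n)/(δ−α) for all n ≥ 1. -/

import Mathlib

/-- Logarithmic bounds on the mean extinction time of the constant-rate birth-death chain:
with `E[T_n] = ∑_{k=1}^n S_k` and `S_k = (1/(δk))·∑_{i=0}^∞ (k/(k+i))(α/δ)^i`,
`ln(n+1)/δ ≤ E[T_n] ≤ (1 + ln n)/(δ − α)`. -/
theorem extinction_time_log_bounds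
    (δ α : ℝ) (hδ : 0 < δ) (hα : 0 < α) (hαδ : α < δ) (n : ℕ) (hn : 1 ≤ n) :
    Real.log (n + 1) / δ ≤
      (∑ k ∈ Finset.Icc 1 n,
        (1 / (δ * k)) * ∑' i : ℕ, ((k : ℝ) / ((k : ℝ) + i)) * (α / δ) ^ i) ∧
    (∑ k ∈ Finset.Icc 1 n,
        (1 / (δ * k)) * ∑' i : ℕ, ((k : ℝ) / ((k : ℝ) + i)) * (α / δ) ^ i) ≤
      (1 + Real.log n) / (δ - α) := by
  set r : ℝ := α / δ with hr
  have hr0 : 0 < r := div_pos hα hδ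
  have hr1 : r < 1 := (div_lt_one hδ).mpr hαδ
  have key : ∀ k ∈ Finset.Icc 1 n,
      1 / (δ * (k : ℝ)) ≤ (1 / (δ * k)) * ∑' i : ℕ, ((k : ℝ) / ((k : ℝ) + i)) * r ^ i ∧
      (1 / (δ * k)) * ∑' i : ℕ, ((k : ℝ) / ((k : ℝ) + i)) * r ^ i
        ≤ 1 / ((δ - α) * k) := by
    intro k hk
    have hk1 : 1 ≤ k := (Finset.mem_Icc.mp hk).1
    have hkpos : (0 : ℝ) < k := by exact_mod_cast hk1
    have hfle : ∀ i : ℕ, ((k : ℝ) / ((k : ℝ) + i)) * r ^ i ≤ r ^ i := by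
      intro i
      have : (k : ℝ) / ((k : ℝ) + i) ≤ 1 := by
        rw [div_le_one (by positivity)]; linarith [Nat.cast_nonneg (α := ℝ) i]
      calc ((k : ℝ) / ((k : ℝ) + i)) * r ^ i ≤ 1 * r ^ i := by
            exact mul_le_mul_of_nonneg_right this (by positivity)
        _ = r ^ i := one_mul _
    have hf0 : ∀ i : ℕ, 0 ≤ ((k : ℝ) / ((k : ℝ) + i)) * r ^ i := by
      intro i; positivity
    have hgeo : Summable fun i : ℕ => r ^ i :=
      summable_geometric_of_lt_one hr0.le hr1
    have hsum : Summable fun i : ℕ => ((k : ℝ) / ((k : ℝ) + i)) * r ^ i :=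
      Summable.of_nonneg_of_le hf0 hfle hgeo
    have hlow : (1 : ℝ) ≤ ∑' i : ℕ, ((k : ℝ) / ((k : ℝ) + i)) * r ^ i := by
      have := Summable.le_tsum hsum 0 (fun i _ => hf0 i)
      simpa [div_self hkpos.ne'] using this
    have hup : ∑' i : ℕ, ((k : ℝ) / ((k : ℝ) + i)) * r ^ i ≤ (1 - r)⁻¹ := by
      calc ∑' i : ℕ, ((k : ℝ) / ((k : ℝ) + i)) * r ^ i
          ≤ ∑' i : ℕ, r ^ i := Summable.tsum_le_tsum hfle hsum hgeo
        _ = (1 - r)⁻¹ := tsum_geometric_of_lt_one hr0.le hr1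
    constructor
    · nlinarith [mul_pos hδ hkpos, one_div_pos.mpr (mul_pos hδ hkpos)]
    · have h1 : (1 / (δ * k)) * ∑' i : ℕ, ((k : ℝ) / ((k : ℝ) + i)) * r ^ i
          ≤ (1 / (δ * k)) * (1 - r)⁻¹ :=
        mul_le_mul_of_nonneg_left hup (by positivity)
      have h2 : (1 / (δ * (k : ℝ))) * (1 - r)⁻¹ = 1 / ((δ - α) * k) := by
        have h1r : (1 : ℝ) - r = (δ - α) / δ := by rw [hr]; field_simp
        rw [h1r, inv_div, one_div_mul_eq_div]
        have hda : (δ - α) ≠ 0 := by linarith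
        field_simp
      linarith
  have hharm_low : Real.log (n + 1) ≤ ∑ k ∈ Finset.Icc 1 n, (1 : ℝ) / k := by
    have := log_add_one_le_harmonic n
    rw [harmonic_eq_sum_Icc] at this
    push_cast at this
    simpa [one_div] using this
  have hharm_up : ∑ k ∈ Finset.Icc 1 n, (1 : ℝ) / k ≤ 1 + Real.log n := by
    have := harmonic_le_one_add_log n
    rw [harmonic_eq_sum_Icc] at this
    push_cast at this
    simpa [one_div] using this
  constructor
  · calc Real.log (n + 1) / δ = ∑ k ∈ Finset.Icc 1 n, (1 : ℝ) / k * (1 / δ) -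
          (∑ k ∈ Finset.Icc 1 n, (1 : ℝ) / k - Real.log (n + 1)) / δ := by
          rw [← Finset.sum_mul]; field_simp; ring
      _ ≤ ∑ k ∈ Finset.Icc 1 n, (1 : ℝ) / k * (1 / δ) := by
          have : 0 ≤ (∑ k ∈ Finset.Icc 1 n, (1 : ℝ) / k - Real.log (n + 1)) / δ := by
            apply div_nonneg _ hδ.le; linarith
          linarith
      _ ≤ _ := by
          apply Finset.sum_le_sum
          intro k hk
          have := (key k hk).1
          rw [show (1 : ℝ) / k * (1 / δ) = 1 / (δ * k) by rw [one_div_mul_one_div]; ring_nf]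
          exact this
  · calc (∑ k ∈ Finset.Icc 1 n,
        (1 / (δ * k)) * ∑' i : ℕ, ((k : ℝ) / ((k : ℝ) + i)) * r ^ i)
        ≤ ∑ k ∈ Finset.Icc 1 n, (1 : ℝ) / k * (1 / (δ - α)) := by
          apply Finset.sum_le_sum
          intro k hk
          have := (key k hk).2
          rw [show (1 : ℝ) / k * (1 / (δ - α)) = 1 / ((δ - α) * k) by
            rw [one_div_mul_one_div]; ring_nf]
          exact this
      _ = (∑ k ∈ Finset.Icc 1 n, (1 : ℝ) / k) / (δ - α) := by
          rw [← Finset.sum_mul]; field_simp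
      _ ≤ (1 + Real.log n) / (δ - α) := by
          apply div_le_div_of_nonneg_right ?_ (by linarith)
          · exact hharm_up
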